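/- Let V be a finite set of m unit vectors in a real Hilbert space such that among any three distinct vectors of V there exist two with inner product at most −4ε, for some 0 < ε < 1. Then m ≤ 1/(16 ε^{3/2}) + O(1/ε). -/

import Mathlib

open scoped RealInnerProductSpace

set_option maxHeartbeats 1000000

/-- if among any three distinct unit vectors of a finite set `V`
some pair has inner product at most `-4ε`, then `|V| ≤ 1/(16 ε^{3/2}) + O(1/ε)`. -/
theorem stmt_13 :
    ∃ K : ℝ, ∀ (E : Type) [NormedAddCommGroup E] [InnerProductSpace ℝ E]
      (V : Finset E) (ε : ℝ), 0 < ε → ε < 1 →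
      (∀ v ∈ V, ‖v‖ = 1) →
      (∀ u ∈ V, ∀ v ∈ V, ∀ w ∈ V, u ≠ v → u ≠ w → v ≠ w →
        ⟪u, v⟫ ≤ -(4 * ε) ∨ ⟪u, w⟫ ≤ -(4 * ε) ∨ ⟪v, w⟫ ≤ -(4 * ε)) →
      (V.card : ℝ) ≤ 1 / (16 * ε ^ ((3 : ℝ) / 2)) + K / ε := by
  refine ⟨4, ?_⟩
  intro E _ _ V ε hε hε1 hnorm htri
  classical
  set s := Real.sqrt ε with hsdef
  have hs0 : 0 < s := Real.sqrt_pos.2 hε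
  have hs2 : s ^ 2 = ε := Real.sq_sqrt hε.le
  have hs1 : s ≤ 1 := by nlinarith
  have hes : ε ≤ s := by nlinarith
  have hrpow : ε ^ ((3:ℝ)/2) = ε * s := by
    have h32 : (3:ℝ)/2 = 1 + 1/2 := by norm_num
    rw [h32, Real.rpow_add hε, Real.rpow_one, hsdef, Real.sqrt_eq_rpow]
  rw [hrpow]
  have hself : ∀ v ∈ V, ⟪v, v⟫ = 1 := by
    intro v hv
    rw [real_inner_self_eq_norm_sq, hnorm v hv]; norm_num
  -- key quadratic bound for pairwise-negative subsets
  have key : ∀ T : Finset E, T ⊆ V →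
      (∀ u ∈ T, ∀ w ∈ T, u ≠ w → ⟪u, w⟫ ≤ -(4*ε)) →
      ‖∑ u ∈ T, u‖ ^ 2 ≤ (T.card : ℝ) - (T.card : ℝ) * ((T.card : ℝ) - 1) * (4*ε) := by
    intro T hTV hpair
    have hdouble : ‖∑ u ∈ T, u‖^2 = ∑ u ∈ T, ∑ w ∈ T, ⟪u, w⟫ := by
      rw [← real_inner_self_eq_norm_sq, sum_inner]
      exact Finset.sum_congr rfl fun u _ => inner_sum _ _ _
    rw [hdouble]
    have hterm : ∀ u ∈ T, ∑ w ∈ T, ⟪u, w⟫ ≤ 1 - ((T.card:ℝ) - 1) * (4*ε) := by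
      intro u hu
      rw [← Finset.sum_erase_add T _ hu, hself u (hTV hu)]
      have hcarde : ((T.erase u).card : ℝ) = (T.card : ℝ) - 1 := by
        rw [Finset.card_erase_of_mem hu]
        have : 1 ≤ T.card := Finset.card_pos.2 ⟨u, hu⟩
        push_cast [Nat.cast_sub this]
        ring
      have hb : ∑ w ∈ T.erase u, ⟪u, w⟫ ≤ ((T.erase u).card : ℝ) * (-(4*ε)) := by
        have := Finset.sum_le_card_nsmul (T.erase u) (fun w => ⟪u, w⟫) (-(4*ε))
          (fun w hw => hpair u hu w (Finset.mem_of_mem_erase hw)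
            (Finset.ne_of_mem_erase hw).symm)
        simpa [nsmul_eq_mul] using this
      rw [hcarde] at hb
      linarith
    calc ∑ u ∈ T, ∑ w ∈ T, ⟪u, w⟫
        ≤ ∑ _u ∈ T, (1 - ((T.card:ℝ) - 1) * (4*ε)) := Finset.sum_le_sum hterm
      _ = (T.card : ℝ) * (1 - ((T.card:ℝ) - 1) * (4*ε)) := by
          rw [Finset.sum_const, nsmul_eq_mul]
      _ = (T.card : ℝ) - (T.card : ℝ) * ((T.card : ℝ) - 1) * (4*ε) := by ring
  set m := V.card with hm
  by_cases hm0 : m = 0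
  · rw [hm0]
    push_cast
    positivity
  have hm1 : 1 ≤ (m:ℝ) := by exact_mod_cast Nat.one_le_iff_ne_zero.2 hm0
  set B := (1+4*ε)/(4*s) with hB
  have hBpos : 0 ≤ B := by positivity
  -- per-vertex bound
  have hvert : ∀ v ∈ V, ∑ u ∈ V.erase v, ⟪v, u⟫ ≤ B - 4*ε*((m:ℝ)-1) + (4*ε + 1) := by
    intro v hv
    set N := (V.erase v).filter (fun u => -(4*ε) < ⟪v, u⟫) with hN
    have hNsub : N ⊆ V := (Finset.filter_subset _ _).trans (Finset.erase_subset _ _)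
    have hNpair : ∀ u ∈ N, ∀ w ∈ N, u ≠ w → ⟪u, w⟫ ≤ -(4*ε) := by
      intro u hu w hw huw
      obtain ⟨hu', hu2⟩ := Finset.mem_filter.1 hu
      obtain ⟨hw', hw2⟩ := Finset.mem_filter.1 hw
      have huv : u ≠ v := Finset.ne_of_mem_erase hu'
      have hwv : w ≠ v := Finset.ne_of_mem_erase hw'
      rcases htri v hv u (Finset.mem_of_mem_erase hu') w (Finset.mem_of_mem_erase hw')
        huv.symm hwv.symm huw with h|h|h
      · exact absurd h (not_le.2 hu2)
      · exact absurd h (not_le.2 hw2)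
      · exact h
    have hkey := key N hNsub hNpair
    have hsq : (0:ℝ) ≤ ‖∑ u ∈ N, u‖^2 := sq_nonneg _
    set d := N.card with hd
    -- card bound : 4ε d ≤ 1 + 4ε
    have hdb : 4*ε*(d:ℝ) ≤ 1 + 4*ε := by
      rcases Nat.eq_zero_or_pos d with h0 | h1
      · rw [h0]; push_cast; nlinarith
      · have h1' : (1:ℝ) ≤ (d:ℝ) := by exact_mod_cast h1
        nlinarith
    -- norm bound : ‖∑ N‖ ≤ B
    have hnormN : ‖∑ u ∈ N, u‖ ≤ B := by
      have hq : ‖∑ u ∈ N, u‖^2 ≤ B^2 := by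
        have hBsq : B^2 = (1+4*ε)^2/(16*ε) := by
          rw [hB, div_pow]
          congr 1
          nlinarith
        rw [hBsq]
        have hcb : (d:ℝ) - (d:ℝ)*((d:ℝ)-1)*(4*ε) ≤ (1+4*ε)^2/(16*ε) := by
          rw [le_div_iff₀ (by positivity)]
          nlinarith [sq_nonneg (1 + 4*ε - 8*ε*(d:ℝ))]
        linarith
      have := (pow_le_pow_iff_left₀ (norm_nonneg _) hBpos (two_ne_zero)).1 hq
      exact this
    -- split the sum
    have hsplit : ∑ u ∈ N, ⟪v, u⟫ +
        ∑ u ∈ (V.erase v).filter (fun u => ¬ (-(4*ε) < ⟪v, u⟫)), ⟪v, u⟫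
        = ∑ u ∈ V.erase v, ⟪v, u⟫ :=
      Finset.sum_filter_add_sum_filter_not _ _ _
    have h1 : ∑ u ∈ N, ⟪v, u⟫ ≤ B := by
      have : ∑ u ∈ N, ⟪v, u⟫ = ⟪v, ∑ u ∈ N, u⟫ := (inner_sum _ _ _).symm
      rw [this]
      calc ⟪v, ∑ u ∈ N, u⟫ ≤ ‖v‖ * ‖∑ u ∈ N, u‖ := real_inner_le_norm _ _
        _ = ‖∑ u ∈ N, u‖ := by rw [hnorm v hv, one_mul]
        _ ≤ B := hnormN
    have hcard2 : ((V.erase v).filter (fun u => ¬ (-(4*ε) < ⟪v, u⟫))).card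
        = (m - 1) - d := by
      have := Finset.card_filter_add_card_filter_not
        (s := V.erase v) (p := fun u => -(4*ε) < ⟪v, u⟫)
      rw [← hN] at this
      have hce : (V.erase v).card = m - 1 := by
        rw [Finset.card_erase_of_mem hv]
      omega
    have h2 : ∑ u ∈ (V.erase v).filter (fun u => ¬ (-(4*ε) < ⟪v, u⟫)), ⟪v, u⟫
        ≤ (((m - 1) - d : ℕ) : ℝ) * (-(4*ε)) := by
      rw [← hcard2]
      have := Finset.sum_le_card_nsmul
        ((V.erase v).filter (fun u => ¬ (-(4*ε) < ⟪v, u⟫))) (fun u => ⟪v, u⟫) (-(4*ε))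
        (fun u hu => le_of_not_gt (Finset.mem_filter.1 hu).2)
      simpa [nsmul_eq_mul] using this
    have hdm : d ≤ m - 1 := by
      have : N.card ≤ (V.erase v).card := Finset.card_le_card (Finset.filter_subset _ _)
      rw [Finset.card_erase_of_mem hv] at this
      exact this
    have hmm : 1 ≤ m := Nat.one_le_iff_ne_zero.2 hm0
    have hcast : (((m - 1) - d : ℕ) : ℝ) = (m:ℝ) - 1 - (d:ℝ) := by
      push_cast [Nat.cast_sub hdm, Nat.cast_sub hmm]
      ring
    rw [hcast] at h2
    nlinarith
  -- total bound
  have htot : (0:ℝ) ≤ (m:ℝ) * ((1 + B - 4*ε*((m:ℝ)-1)) + (4*ε + 1)) := by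
    have h0 : (0:ℝ) ≤ ‖∑ v ∈ V, v‖^2 := sq_nonneg _
    have hdouble : ‖∑ v ∈ V, v‖^2 = ∑ v ∈ V, ∑ u ∈ V, ⟪v, u⟫ := by
      rw [← real_inner_self_eq_norm_sq, sum_inner]
      exact Finset.sum_congr rfl fun u _ => inner_sum _ _ _
    have hterm : ∀ v ∈ V, ∑ u ∈ V, ⟪v, u⟫
        ≤ (1 + B - 4*ε*((m:ℝ)-1)) + (4*ε + 1) := by
      intro v hv
      rw [← Finset.sum_erase_add V _ hv, hself v hv]
      have := hvert v hv
      linarith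
    have : ‖∑ v ∈ V, v‖^2 ≤ (m:ℝ) * ((1 + B - 4*ε*((m:ℝ)-1)) + (4*ε + 1)) := by
      rw [hdouble]
      calc ∑ v ∈ V, ∑ u ∈ V, ⟪v, u⟫
          ≤ ∑ _v ∈ V, ((1 + B - 4*ε*((m:ℝ)-1)) + (4*ε + 1)) := Finset.sum_le_sum hterm
        _ = (m:ℝ) * ((1 + B - 4*ε*((m:ℝ)-1)) + (4*ε + 1)) := by
            rw [Finset.sum_const, nsmul_eq_mul]
    linarith
  have hmain : 4*ε*((m:ℝ)-1) ≤ 2 + 4*ε + B := by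
    nlinarith
  -- finish
  have h16 : (0:ℝ) < 16*(ε*s) := by positivity
  rw [← mul_le_mul_iff_left₀ h16]
  have hrhs : (1/(16*(ε*s)) + 4/ε) * (16*(ε*s)) = 1 + 64*s := by
    field_simp
    ring
  rw [hrhs]
  have hB4 : B * (4*s) = 1 + 4*ε := by
    rw [hB]; field_simp
  have hmul := mul_le_mul_of_nonneg_right hmain (by positivity : (0:ℝ) ≤ 4*s)
  have heps : ε*s ≤ s := by nlinarith
  nlinarith
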